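/- For the (1,1,-1) reduced system, both H = -(1/2)log(Z+Θ) + (1/2)log(Z²-X²) and C = Z² - X² - Y² are conserved along solutions of dX/dt = -2Y/(Z+Θ) + 4ZY/(Z²-X²), dY/dt = 2X/(Z+Θ), dZ/dt = 4XY/(Z²-X²). -/

import Mathlib

/-- Along solutions of the (1,1,-1) reduced system, both the Hamiltonian
H = -(1/2)log(Z+Θ) + (1/2)log(Z²-X²) and the Casimir C = Z² - X² - Y² are
conserved. -/
theorem reduced_system_conserved (Θ : ℝ) (X Y Z : ℝ → ℝ)
    (hdom : ∀ t : ℝ, 0 < Z t + Θ ∧ (X t) ^ 2 < (Z t) ^ 2)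
    (hX : ∀ t : ℝ, HasDerivAt X
      (-2 * Y t / (Z t + Θ) + 4 * Z t * Y t / ((Z t) ^ 2 - (X t) ^ 2)) t)
    (hY : ∀ t : ℝ, HasDerivAt Y (2 * X t / (Z t + Θ)) t)
    (hZ : ∀ t : ℝ, HasDerivAt Z (4 * X t * Y t / ((Z t) ^ 2 - (X t) ^ 2)) t) :
    ∀ t : ℝ,
      HasDerivAt (fun s =>
        -(1 / 2) * Real.log (Z s + Θ) + (1 / 2) * Real.log ((Z s) ^ 2 - (X s) ^ 2)) 0 t ∧
      HasDerivAt (fun s => (Z s) ^ 2 - (X s) ^ 2 - (Y s) ^ 2) 0 t := by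
  intro t
  obtain ⟨ha, hd⟩ := hdom t
  have hane : Z t + Θ ≠ 0 := ne_of_gt ha
  have hdpos : 0 < (Z t) ^ 2 - (X t) ^ 2 := sub_pos.mpr hd
  have hdne : (Z t) ^ 2 - (X t) ^ 2 ≠ 0 := ne_of_gt hdpos
  constructor
  · have h1 : HasDerivAt (fun s => Real.log (Z s + Θ))
        ((4 * X t * Y t / ((Z t) ^ 2 - (X t) ^ 2)) / (Z t + Θ)) t :=
      ((hZ t).add_const Θ).log hane
    have h2 : HasDerivAt (fun s => (Z s) ^ 2 - (X s) ^ 2)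
        (2 * Z t * (4 * X t * Y t / ((Z t) ^ 2 - (X t) ^ 2)) -
          2 * X t * (-2 * Y t / (Z t + Θ) + 4 * Z t * Y t / ((Z t) ^ 2 - (X t) ^ 2))) t := by
      have := (((hZ t).pow 2).sub ((hX t).pow 2))
      simpa [Pi.sub_def, Pi.pow_def, mul_comm, mul_assoc, mul_left_comm] using this
    have h3 := (h2.log hdne)
    have h := (h1.const_mul (-(1/2) : ℝ)).add (h3.const_mul ((1/2) : ℝ))
    refine h.congr_deriv ?_
    field_simp
    ring
  · have h := (((hZ t).pow 2).sub ((hX t).pow 2)).sub ((hY t).pow 2)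
    refine h.congr_deriv ?_
    field_simp
    ring
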